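/- Fix m ≥ 2 and n ≥ 0. For every integer ℓ ≥ 1, the number of σ in the simple m-nary butterfly group B_{s,n}^{(m)} with L(σ) = ℓ equals the number of tuples (a_1,…,a_n) ∈ {1,…,m}^n with ∏_{j=1}^n max(a_j, m − a_j) = ℓ. Equivalently, for σ uniform on B_{s,n}^{(m)}, the distribution of L(σ) equals the distribution of ∏_{j=1}^n max(X_j, m − X_j) where X_1,…,X_n are i.i.d. uniform on {1,…,m}. -/

import Mathlib

/-- Kronecker product of permutations: `(i, r) ↦ (σ i, π r)` under the
row-major identification `Fin (a * b) ≃ Fin a × Fin b`. -/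
def permKron {a b : ℕ} (σ : Equiv.Perm (Fin a)) (π : Equiv.Perm (Fin b)) :
    Equiv.Perm (Fin (a * b)) :=
  finProdFinEquiv.symm.trans ((Equiv.prodCongr σ π).trans finProdFinEquiv)

/-- Direct (block) sum of permutations: `(i, r) ↦ (i, π i r)`. -/
def permBlockSum {a b : ℕ} (π : Fin a → Equiv.Perm (Fin b)) :
    Equiv.Perm (Fin (a * b)) :=
  finProdFinEquiv.symm.trans ((Equiv.prodCongrRight π).trans finProdFinEquiv)

/-- The simple `m`-nary butterfly permutations of `Fin (m ^ n)`:
Kronecker products `τ^{a₁} ⊗ ⋯ ⊗ τ^{aₙ}` of powers of the standard `m`-cycle `τ = finRotate m`. -/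
def simpleButterfly (m : ℕ) : (n : ℕ) → Set (Equiv.Perm (Fin (m ^ n)))
  | 0 => {1}
  | n + 1 =>
    {σ | ∃ (a : ℤ) (π : Equiv.Perm (Fin (m ^ n))), π ∈ simpleButterfly m n ∧
      σ = (finCongr (pow_succ' m n).symm).permCongr (permKron (finRotate m ^ a) π)}

/-- The nonsimple `m`-nary butterfly permutations of `Fin (m ^ n)`:
`B₀ = {1}`, `B_{n+1} = {(τ^a ⊗ id) ∘ (σ₁ ⊕ ⋯ ⊕ σ_m) : σᵢ ∈ B_n}`. -/
def nonsimpleButterfly (m : ℕ) : (n : ℕ) → Set (Equiv.Perm (Fin (m ^ n)))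
  | 0 => {1}
  | n + 1 =>
    {σ | ∃ (a : ℤ) (π : Fin m → Equiv.Perm (Fin (m ^ n))),
      (∀ i, π i ∈ nonsimpleButterfly m n) ∧
      σ = (finCongr (pow_succ' m n).symm).permCongr
        (permKron (finRotate m ^ a) 1 * permBlockSum π)}

/-- The length of the longest increasing subsequence of a permutation. -/
noncomputable def LIS {M : ℕ} (σ : Equiv.Perm (Fin M)) : ℕ :=
  sSup {k | ∃ t : Finset (Fin M), t.card = k ∧ StrictMonoOn (⇑σ) ↑t}

/-- The length of the longest decreasing subsequence of a permutation. -/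
noncomputable def LDS {M : ℕ} (σ : Equiv.Perm (Fin M)) : ℕ :=
  sSup {k | ∃ t : Finset (Fin M), t.card = k ∧ StrictAntiOn (⇑σ) ↑t}

/-- The number of cycles in the disjoint cycle decomposition of `σ`,
counting fixed points as cycles of length 1. -/
def numCycles {M : ℕ} (σ : Equiv.Perm (Fin M)) : ℕ :=
  Multiset.card σ.cycleType + (Finset.univ.filter fun x => σ x = x).card

/-- The number of fixed points of `σ`. -/
def numFixed {M : ℕ} (σ : Equiv.Perm (Fin M)) : ℕ :=
  (Finset.univ.filter fun x => σ x = x).card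

section A
variable {M : ℕ}

private lemma lis_zero_mem (σ : Equiv.Perm (Fin M)) :
    0 ∈ {k | ∃ t : Finset (Fin M), t.card = k ∧ StrictMonoOn (⇑σ) ↑t} :=
  ⟨∅, Finset.card_empty, by simp [StrictMonoOn]⟩

private lemma lis_bddAbove (σ : Equiv.Perm (Fin M)) :
    BddAbove {k | ∃ t : Finset (Fin M), t.card = k ∧ StrictMonoOn (⇑σ) ↑t} := by
  refine ⟨M, fun k hk => ?_⟩
  obtain ⟨t, rfl, -⟩ := hk
  simpa using t.card_le_univ

private lemma card_le_LIS {σ : Equiv.Perm (Fin M)} {t : Finset (Fin M)}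
    (h : StrictMonoOn (⇑σ) ↑t) : t.card ≤ LIS σ :=
  le_csSup (lis_bddAbove σ) ⟨t, rfl, h⟩

private lemma LIS_exists (σ : Equiv.Perm (Fin M)) :
    ∃ t : Finset (Fin M), t.card = LIS σ ∧ StrictMonoOn (⇑σ) ↑t :=
  Nat.sSup_mem ⟨0, lis_zero_mem σ⟩ (lis_bddAbove σ)

private lemma LIS_le {σ : Equiv.Perm (Fin M)} {l : ℕ}
    (h : ∀ t : Finset (Fin M), StrictMonoOn (⇑σ) ↑t → t.card ≤ l) : LIS σ ≤ l :=
  csSup_le ⟨0, lis_zero_mem σ⟩ (fun k ⟨t, ht, hm⟩ => ht ▸ h t hm)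

private lemma LIS_le_card (σ : Equiv.Perm (Fin M)) : LIS σ ≤ M :=
  LIS_le fun t _ => by simpa using t.card_le_univ

private lemma LIS_one : LIS (1 : Equiv.Perm (Fin M)) = M := by
  refine le_antisymm (LIS_le_card _) ?_
  have h := card_le_LIS (σ := (1 : Equiv.Perm (Fin M))) (t := Finset.univ)
    (fun x _ y _ hxy => by simpa using hxy)
  simpa using h

private lemma LIS_permCongr {N : ℕ} (h : M = N) (σ : Equiv.Perm (Fin M)) :
    LIS ((finCongr h).permCongr σ) = LIS σ := by
  subst h
  have : (finCongr (rfl : M = M)).permCongr σ = σ := by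
    ext x
    simp [Equiv.permCongr_apply]
  rw [this]

end A

open Fin.NatCast in
private lemma finRotate_pow_apply {m : ℕ} (k : ℕ) (i : Fin (m + 1)) :
    (finRotate (m + 1) ^ k) i = i + (k : Fin (m + 1)) := by
  induction k generalizing i with
  | zero => simp
  | succ k ih =>
    rw [pow_succ, Equiv.Perm.mul_apply, finRotate_succ_apply, ih]
    push_cast
    abel

open Fin.NatCast in
private lemma finRotate_pow_val {m : ℕ} (hm : 0 < m) (k : ℕ) (i : Fin m) :
    ((finRotate m ^ k) i).val = (i.val + k) % m := by
  obtain _ | m := m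
  · exact i.elim0
  · rw [finRotate_pow_apply]
    rw [Fin.add_def]
    simp only [Fin.val_natCast]
    conv_rhs => rw [Nat.add_mod, Nat.mod_eq_of_lt i.isLt]

private lemma finRotate_pow_self {m : ℕ} (hm : 0 < m) : finRotate m ^ m = 1 := by
  refine Equiv.ext fun i => Fin.ext ?_
  rw [finRotate_pow_val hm]
  simp [Nat.add_mod_right, Nat.mod_eq_of_lt i.isLt]

private lemma finRotate_pow_mod {m : ℕ} (hm : 0 < m) (c : ℕ) :
    finRotate m ^ c = finRotate m ^ (c % m) := by
  conv_lhs => rw [← Nat.div_add_mod c m]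
  rw [pow_add, pow_mul, finRotate_pow_self hm, one_pow, one_mul]

private lemma finRotate_zpow_eq {m : ℕ} (hm : 2 ≤ m) (a : ℤ) :
    ∃ j : Fin m, finRotate m ^ a = finRotate m ^ ((j : ℕ) + 1) := by
  have hm0 : (0 : ℤ) < (m : ℤ) := by exact_mod_cast (by omega : 0 < m)
  have h1 : finRotate m ^ a = finRotate m ^ (a % (m : ℤ)) := by
    conv_lhs => rw [← Int.mul_ediv_add_emod a (m : ℤ)]
    rw [zpow_add, zpow_mul, zpow_natCast, finRotate_pow_self (by omega), one_zpow, one_mul]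
  have hnn : 0 ≤ a % (m : ℤ) := Int.emod_nonneg a (by omega)
  have hlt : a % (m : ℤ) < (m : ℤ) := Int.emod_lt_of_pos a hm0
  set r : ℕ := (a % (m : ℤ)).toNat with hr
  have hrm : r < m := by omega
  have h2 : finRotate m ^ a = finRotate m ^ r := by
    rw [h1, ← zpow_natCast (finRotate m) r]
    congr 1
    omega
  by_cases h0 : r = 0
  · refine ⟨⟨m - 1, by omega⟩, ?_⟩
    rw [h2, h0, pow_zero]
    have : m - 1 + 1 = m := by omega
    rw [this, finRotate_pow_self (by omega)]
  · refine ⟨⟨r - 1, by omega⟩, ?_⟩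
    rw [h2]
    have hv : ((⟨r - 1, by omega⟩ : Fin m) : ℕ) + 1 = r := by
      show r - 1 + 1 = r
      omega
    rw [hv]

private lemma LIS_finRotate_pow {m b : ℕ} (hb0 : 0 < b) (hb : b < m) :
    LIS (finRotate m ^ b) = max b (m - b) := by
  have hm : 0 < m := by omega
  apply le_antisymm
  · apply LIS_le
    intro t ht
    by_cases hall : ∀ x ∈ t, x.val < m - b
    · refine le_trans ?_ (le_max_right b (m - b))
      have hcard := Finset.card_le_card_of_injOn (s := t) (t := Finset.univ)
        (fun x : Fin m => (⟨x.val % (m - b), Nat.mod_lt _ (by omega)⟩ : Fin (m - b)))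
        (fun x _ => Finset.mem_univ _) ?_
      · simpa using hcard
      · intro x hx y hy hxy
        have hx' := hall x (Finset.mem_coe.1 hx)
        have hy' := hall y (Finset.mem_coe.1 hy)
        have := congrArg Fin.val hxy
        simp only at this
        rw [Nat.mod_eq_of_lt hx', Nat.mod_eq_of_lt hy'] at this
        exact Fin.ext this
    · push_neg at hall
      obtain ⟨x₀, hx₀t, hx₀⟩ := hall
      have hall2 : ∀ x ∈ t, m - b ≤ x.val := by
        intro x hx
        by_contra hlt
        push_neg at hlt
        have hxlt : x < x₀ := Fin.lt_def.2 (by omega)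
        have hmono := ht (Finset.mem_coe.2 hx) (Finset.mem_coe.2 hx₀t) hxlt
        rw [Fin.lt_def, finRotate_pow_val hm, finRotate_pow_val hm] at hmono
        have e1 : (x.val + b) % m = x.val + b := Nat.mod_eq_of_lt (by omega)
        have hx₀m := x₀.isLt
        have e2 : (x₀.val + b) % m = x₀.val + b - m := by
          rw [Nat.mod_eq_sub_mod (by omega)]
          exact Nat.mod_eq_of_lt (by omega)
        omega
      refine le_trans ?_ (le_max_left b (m - b))
      have hcard := Finset.card_le_card_of_injOn (s := t) (t := Finset.univ)
        (fun x : Fin m => (⟨(x.val - (m - b)) % b, Nat.mod_lt _ hb0⟩ : Fin b))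
        (fun x _ => Finset.mem_univ _) ?_
      · simpa using hcard
      · intro x hx y hy hxy
        have hx' := hall2 x (Finset.mem_coe.1 hx)
        have hy' := hall2 y (Finset.mem_coe.1 hy)
        have hxm := x.isLt
        have hym := y.isLt
        have := congrArg Fin.val hxy
        simp only at this
        rw [Nat.mod_eq_of_lt (by omega), Nat.mod_eq_of_lt (by omega)] at this
        exact Fin.ext (by omega)
  · have h1 : m - b ≤ LIS (finRotate m ^ b) := by
      have := card_le_LIS (σ := finRotate m ^ b)
        (t := Finset.univ.map (Fin.castLEEmb (show m - b ≤ m by omega))) ?_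
      · simpa using this
      · intro x hx y hy hxy
        simp only [Finset.coe_map, Set.mem_image, Finset.mem_coe, Finset.mem_univ] at hx hy
        obtain ⟨x', -, rfl⟩ := hx
        obtain ⟨y', -, rfl⟩ := hy
        have hx' : (Fin.castLEEmb (show m - b ≤ m by omega) x' : Fin m).val < m - b := x'.isLt
        have hy' : (Fin.castLEEmb (show m - b ≤ m by omega) y' : Fin m).val < m - b := y'.isLt
        rw [Fin.lt_def] at hxy ⊢
        rw [finRotate_pow_val hm, finRotate_pow_val hm,
          Nat.mod_eq_of_lt (by omega), Nat.mod_eq_of_lt (by omega)]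
        omega
    have h2 : b ≤ LIS (finRotate m ^ b) := by
      have := card_le_LIS (σ := finRotate m ^ b)
        (t := Finset.univ.map ⟨fun i : Fin b => (⟨m - b + i.val, by omega⟩ : Fin m),
          fun i j hij => Fin.ext (by have := congrArg Fin.val hij; simp only at this; omega)⟩) ?_
      · simpa using this
      · intro x hx y hy hxy
        simp only [Finset.coe_map, Set.mem_image, Finset.mem_coe, Finset.mem_univ,
          Function.Embedding.coeFn_mk] at hx hy
        obtain ⟨x', -, rfl⟩ := hx
        obtain ⟨y', -, rfl⟩ := hy
        have hx'' := x'.isLt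
        have hy'' := y'.isLt
        rw [Fin.lt_def] at hxy ⊢
        change m - b + x'.val < m - b + y'.val at hxy
        rw [finRotate_pow_val hm, finRotate_pow_val hm]
        show (m - b + x'.val + b) % m < (m - b + y'.val + b) % m
        have e1 : (m - b + x'.val + b) % m = x'.val := by
          rw [Nat.mod_eq_sub_mod (by omega)]
          have : m - b + x'.val + b - m = x'.val := by omega
          rw [this]
          exact Nat.mod_eq_of_lt (by omega)
        have e2 : (m - b + y'.val + b) % m = y'.val := by
          rw [Nat.mod_eq_sub_mod (by omega)]
          have : m - b + y'.val + b - m = y'.val := by omega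
          rw [this]
          exact Nat.mod_eq_of_lt (by omega)
        omega
    exact max_le h2 h1

private lemma finProdFinEquiv_val {a b : ℕ} (p : Fin a × Fin b) :
    (finProdFinEquiv p).val = p.2.val + b * p.1.val := rfl

private lemma finProdFinEquiv_lt_mono {a b : ℕ} {p q : Fin a × Fin b}
    (h : p.1 < q.1 ∨ p.1 = q.1 ∧ p.2 < q.2) : finProdFinEquiv p < finProdFinEquiv q := by
  rw [Fin.lt_def, finProdFinEquiv_val, finProdFinEquiv_val]
  rcases h with h | ⟨h1, h2⟩
  · have hp2 : p.2.val < b := p.2.isLt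
    have hmul : b * (p.1.val + 1) ≤ b * q.1.val := Nat.mul_le_mul_left _ h
    rw [Nat.mul_add, Nat.mul_one] at hmul
    omega
  · rw [h1]
    have h2' : p.2.val < q.2.val := h2
    omega

private lemma finProdFinEquiv_lt {a b : ℕ} {p q : Fin a × Fin b} :
    finProdFinEquiv p < finProdFinEquiv q ↔ (p.1 < q.1 ∨ p.1 = q.1 ∧ p.2 < q.2) := by
  constructor
  · intro h
    rcases lt_trichotomy p.1 q.1 with h1 | h1 | h1
    · exact Or.inl h1
    · rcases lt_trichotomy p.2 q.2 with h2 | h2 | h2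
      · exact Or.inr ⟨h1, h2⟩
      · exact absurd h (by rw [Prod.ext h1 h2]; exact lt_irrefl _)
      · exact absurd h (lt_asymm (finProdFinEquiv_lt_mono (Or.inr ⟨h1.symm, h2⟩)))
    · exact absurd h (lt_asymm (finProdFinEquiv_lt_mono (Or.inl h1)))
  · exact finProdFinEquiv_lt_mono

private lemma permKron_apply {a b : ℕ} (σ : Equiv.Perm (Fin a)) (π : Equiv.Perm (Fin b))
    (p : Fin a × Fin b) :
    permKron σ π (finProdFinEquiv p) = finProdFinEquiv (σ p.1, π p.2) := by
  simp [permKron, Equiv.prodCongr_apply, Prod.map]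

private lemma LIS_permKron {a b : ℕ} (σ : Equiv.Perm (Fin a)) (π : Equiv.Perm (Fin b)) :
    LIS (permKron σ π) = LIS σ * LIS π := by
  classical
  apply le_antisymm
  · apply LIS_le
    intro t ht
    set t' : Finset (Fin a × Fin b) := t.map finProdFinEquiv.symm.toEmbedding with ht'
    have hcard : t'.card = t.card := Finset.card_map _
    have hmem : ∀ p ∈ t', finProdFinEquiv p ∈ t := by
      intro p hp
      rw [ht', Finset.mem_map] at hp
      obtain ⟨x, hx, rfl⟩ := hp
      simp only [Equiv.coe_toEmbedding]
      rw [Equiv.apply_symm_apply]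
      exact hx
    have key : ∀ p ∈ t', ∀ q ∈ t', (p.1 < q.1 ∨ p.1 = q.1 ∧ p.2 < q.2) →
        (σ p.1 < σ q.1 ∨ σ p.1 = σ q.1 ∧ π p.2 < π q.2) := by
      intro p hp q hq hpq
      have h1 : finProdFinEquiv p < finProdFinEquiv q := finProdFinEquiv_lt_mono hpq
      have h2 := ht (Finset.mem_coe.2 (hmem p hp)) (Finset.mem_coe.2 (hmem q hq)) h1
      rw [permKron_apply, permKron_apply] at h2
      exact finProdFinEquiv_lt.1 h2
    set I : Finset (Fin a) := t'.image Prod.fst with hI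
    have hIcard : I.card ≤ LIS σ := by
      apply card_le_LIS
      intro i hi j hj hij
      rw [Finset.mem_coe, hI, Finset.mem_image] at hi hj
      obtain ⟨p, hp, rfl⟩ := hi
      obtain ⟨q, hq, rfl⟩ := hj
      rcases key p hp q hq (Or.inl hij) with h | ⟨h, -⟩
      · exact h
      · exact absurd (σ.injective h) (ne_of_lt hij)
    have hfib : ∀ i ∈ I, (t'.filter fun p => p.1 = i).card ≤ LIS π := by
      intro i _
      have h1 : ((t'.filter fun p => p.1 = i).image Prod.snd).card
          = (t'.filter fun p => p.1 = i).card := by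
        apply Finset.card_image_of_injOn
        intro p hp q hq hpq
        rw [Finset.mem_coe, Finset.mem_filter] at hp hq
        exact Prod.ext (hp.2.trans hq.2.symm) hpq
      rw [← h1]
      apply card_le_LIS
      intro r hr s hs hrs
      rw [Finset.mem_coe, Finset.mem_image] at hr hs
      obtain ⟨p, hp, rfl⟩ := hr
      obtain ⟨q, hq, rfl⟩ := hs
      rw [Finset.mem_filter] at hp hq
      rcases key p hp.1 q hq.1 (Or.inr ⟨hp.2.trans hq.2.symm, hrs⟩) with h | ⟨-, h⟩
      · rw [hp.2, hq.2] at h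
        exact absurd h (lt_irrefl _)
      · exact h
    calc t.card = t'.card := hcard.symm
      _ = ∑ i ∈ I, (t'.filter fun p => p.1 = i).card :=
        Finset.card_eq_sum_card_fiberwise fun p hp => Finset.mem_image_of_mem _ hp
      _ ≤ I.card * LIS π := by
        have := Finset.sum_le_card_nsmul I _ (LIS π) hfib
        simpa [smul_eq_mul] using this
      _ ≤ LIS σ * LIS π := Nat.mul_le_mul_right _ hIcard
  · obtain ⟨s, hscard, hsm⟩ := LIS_exists σ
    obtain ⟨u, hucard, hum⟩ := LIS_exists π
    have := card_le_LIS (σ := permKron σ π)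
      (t := (s ×ˢ u).map finProdFinEquiv.toEmbedding) ?_
    · simpa [hscard, hucard] using this
    · intro x hx y hy hxy
      rw [Finset.mem_coe, Finset.mem_map] at hx hy
      obtain ⟨p, hp, rfl⟩ := hx
      obtain ⟨q, hq, rfl⟩ := hy
      rw [Finset.mem_product] at hp hq
      simp only [Equiv.coe_toEmbedding] at hxy ⊢
      rw [permKron_apply, permKron_apply]
      apply finProdFinEquiv_lt_mono
      rcases finProdFinEquiv_lt.1 hxy with h | ⟨h1, h2⟩
      · exact Or.inl (hsm (Finset.mem_coe.2 hp.1) (Finset.mem_coe.2 hq.1) h)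
      · exact Or.inr ⟨by rw [h1], hum (Finset.mem_coe.2 hp.2) (Finset.mem_coe.2 hq.2) h2⟩

private def Fkron (m : ℕ) : (n : ℕ) → (Fin n → Fin m) → Equiv.Perm (Fin (m ^ n))
  | 0, _ => 1
  | n + 1, a =>
    (finCongr (pow_succ' m n).symm).permCongr
      (permKron (finRotate m ^ ((a 0 : ℕ) + 1)) (Fkron m n fun j => a j.succ))

private lemma LIS_Fkron {m : ℕ} (hm : 2 ≤ m) :
    ∀ (n : ℕ) (a : Fin n → Fin m),
      LIS (Fkron m n a) = ∏ j, max ((a j : ℕ) + 1) (m - ((a j : ℕ) + 1))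
  | 0, a => by simp [Fkron, LIS_one]; exact LIS_one
  | n + 1, a => by
    rw [Fkron, LIS_permCongr, LIS_permKron, LIS_Fkron hm n, Fin.prod_univ_succ]
    congr 1
    have h1 : (a 0 : ℕ) + 1 ≤ m := (a 0).isLt
    by_cases h : (a 0 : ℕ) + 1 = m
    · rw [h, finRotate_pow_self (by omega), LIS_one]
      simp [h]
    · rw [LIS_finRotate_pow (by omega) (by omega)]

private lemma simpleButterfly_eq_range {m : ℕ} (hm : 2 ≤ m) :
    ∀ n : ℕ, simpleButterfly m n = Set.range (Fkron m n)
  | 0 => by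
    ext σ
    simp only [simpleButterfly, Set.mem_singleton_iff, Set.mem_range]
    constructor
    · rintro rfl
      exact ⟨fun j => j.elim0, rfl⟩
    · rintro ⟨a, rfl⟩
      rfl
  | n + 1 => by
    ext σ
    simp only [simpleButterfly, Set.mem_setOf_eq, Set.mem_range]
    constructor
    · rintro ⟨a, π, hπ, rfl⟩
      rw [simpleButterfly_eq_range hm n] at hπ
      obtain ⟨a', rfl⟩ := hπ
      obtain ⟨j, hj⟩ := finRotate_zpow_eq hm a
      refine ⟨Fin.cons j a', ?_⟩
      rw [Fkron]
      simp only [Fin.cons_zero, Fin.cons_succ]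
      rw [hj]
    · rintro ⟨a, rfl⟩
      refine ⟨((((a 0 : ℕ) + 1 : ℕ)) : ℤ), Fkron m n (fun j => a j.succ), ?_, ?_⟩
      · rw [simpleButterfly_eq_range hm n]
        exact ⟨_, rfl⟩
      · rw [Fkron, zpow_natCast]

private lemma Fkron_injective {m : ℕ} (hm : 2 ≤ m) :
    ∀ n : ℕ, Function.Injective (Fkron m n)
  | 0 => fun a a' _ => funext fun j => j.elim0
  | n + 1 => by
    intro a a' h
    rw [Fkron, Fkron] at h
    have h2 := (Equiv.permCongr (finCongr (pow_succ' m n).symm)).injective h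
    have key : ∀ p : Fin m × Fin (m ^ n),
        ((finRotate m ^ ((a 0 : ℕ) + 1)) p.1, Fkron m n (fun j => a j.succ) p.2)
          = ((finRotate m ^ ((a' 0 : ℕ) + 1)) p.1, Fkron m n (fun j => a' j.succ) p.2) := by
      intro p
      have h3 := congrArg (fun f : Equiv.Perm (Fin (m * m ^ n)) => f (finProdFinEquiv p)) h2
      rw [permKron_apply, permKron_apply] at h3
      exact finProdFinEquiv.injective h3
    have hmn : 0 < m ^ n := Nat.pow_pos (by omega)
    have ha0 : a 0 = a' 0 := by
      have h0 := congrArg Prod.fst (key (⟨0, by omega⟩, ⟨0, hmn⟩))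
      simp only at h0
      have hv := congrArg Fin.val h0
      rw [finRotate_pow_val (by omega), finRotate_pow_val (by omega)] at hv
      simp only [Nat.zero_add] at hv
      have hb1 : (a 0 : ℕ) < m := (a 0).isLt
      have hb2 : (a' 0 : ℕ) < m := (a' 0).isLt
      apply Fin.ext
      by_cases e1 : (a 0 : ℕ) + 1 = m <;> by_cases e2 : (a' 0 : ℕ) + 1 = m
      · omega
      · rw [e1, Nat.mod_self, Nat.mod_eq_of_lt (by omega)] at hv
        omega
      · rw [e2, Nat.mod_self, Nat.mod_eq_of_lt (by omega)] at hv
        omega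
      · rw [Nat.mod_eq_of_lt (by omega), Nat.mod_eq_of_lt (by omega)] at hv
        omega
    have hF : Fkron m n (fun j => a j.succ) = Fkron m n (fun j => a' j.succ) :=
      Equiv.ext fun r => congrArg Prod.snd (key (⟨0, by omega⟩, r))
    have htail := Fkron_injective hm n hF
    funext j
    refine Fin.cases ?_ ?_ j
    · exact ha0
    · exact fun j' => congrFun htail j'

/-- The number of `σ ∈ B_{s,n}^{(m)}` with `L(σ) = ℓ` equals the number of tuples
`(a₁,…,aₙ) ∈ {1,…,m}ⁿ` with `∏ⱼ max(aⱼ, m − aⱼ) = ℓ` (here `a : Fin n → Fin m`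
encodes `aⱼ = a j + 1 ∈ {1,…,m}`).  Equivalently, for `σ` uniform on `B_{s,n}^{(m)}`,
`L(σ)` is distributed as `∏ⱼ max(Xⱼ, m − Xⱼ)` with `Xⱼ` i.i.d. uniform on `{1,…,m}`. -/
theorem simpleButterfly_LIS_distribution (m n : ℕ) (hm : 2 ≤ m) (ℓ : ℕ) (hℓ : 1 ≤ ℓ) :
    {σ | σ ∈ simpleButterfly m n ∧ LIS σ = ℓ}.ncard =
      (Finset.univ.filter fun a : Fin n → Fin m =>
        (∏ j, max ((a j : ℕ) + 1) (m - ((a j : ℕ) + 1))) = ℓ).card := by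
  classical
  have himg : {σ | σ ∈ simpleButterfly m n ∧ LIS σ = ℓ}
      = Fkron m n '' {a | (∏ j, max ((a j : ℕ) + 1) (m - ((a j : ℕ) + 1))) = ℓ} := by
    ext σ
    simp only [Set.mem_setOf_eq, simpleButterfly_eq_range hm n, Set.mem_image, Set.mem_range]
    constructor
    · rintro ⟨⟨a, rfl⟩, h⟩
      exact ⟨a, (LIS_Fkron hm n a).symm.trans h, rfl⟩
    · rintro ⟨a, ha, rfl⟩
      exact ⟨⟨a, rfl⟩, (LIS_Fkron hm n a).trans ha⟩
  rw [himg, Set.ncard_image_of_injective _ (Fkron_injective hm n)]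
  rw [show {a : Fin n → Fin m | (∏ j, max ((a j : ℕ) + 1) (m - ((a j : ℕ) + 1))) = ℓ}
      = ↑(Finset.univ.filter fun a : Fin n → Fin m =>
        (∏ j, max ((a j : ℕ) + 1) (m - ((a j : ℕ) + 1))) = ℓ) from by ext a; simp]
  exact Set.ncard_coe_finset _
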